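/- For all x > 0, (18^{1/4}/√(2π))·x^x·e^{−x}·(x² + x/3 + 1/18)^{1/4} < Γ(x+1) < √(2π)·x^x·e^{−x}·(x² + x/3 + 1/18)^{1/4}. -/

import Mathlib

open Real Filter Set Topology

noncomputable def Qp (x : ℝ) : ℝ := x^2 + x/3 + 1/18

lemma Qp_pos (x : ℝ) : 0 < Qp x := by unfold Qp; nlinarith [sq_nonneg (x + 1/6)]

lemma artanh_lb {u : ℝ} (hu0 : 0 < u) (hu1 : u < 1) :
    2*(u + u^3/3 + u^5/5 + u^7/7) < Real.log ((1+u)/(1-u)) := by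
  set h : ℝ → ℝ := fun u => Real.log (1+u) - Real.log (1-u) - 2*(u + u^3/3 + u^5/5 + u^7/7) with hh
  have hderiv : ∀ v ∈ Set.Ioo (0:ℝ) 1, 0 < deriv h v := by
    intro v hv
    obtain ⟨hv0, hv1⟩ := hv
    have h1 : HasDerivAt (fun u : ℝ => Real.log (1+u)) (1/(1+v)) v := by
      have := ((hasDerivAt_id v).const_add 1).log (by linarith : (1:ℝ)+v ≠ 0)
      simpa using this
    have h2 : HasDerivAt (fun u : ℝ => Real.log (1-u)) (-(1/(1-v))) v := by
      have := ((hasDerivAt_id v).const_sub 1).log (by linarith : (1:ℝ)-v ≠ 0)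
      simpa [neg_div] using this
    have h3 : HasDerivAt (fun u : ℝ => 2*(u + u^3/3 + u^5/5 + u^7/7))
        (2*(1 + v^2 + v^4 + v^6)) v := by
      have : HasDerivAt (fun u : ℝ => u + u^3/3 + u^5/5 + u^7/7)
          (1 + v^2 + v^4 + v^6) v := by
        have p3 := (hasDerivAt_pow 3 v).div_const 3
        have p5 := (hasDerivAt_pow 5 v).div_const 5
        have p7 := (hasDerivAt_pow 7 v).div_const 7
        have := (((hasDerivAt_id v).add p3).add p5).add p7
        refine this.congr_deriv ?_
        push_cast
        ring
      simpa using this.const_mul 2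
    have hd : HasDerivAt h (1/(1+v) - (-(1/(1-v))) - 2*(1 + v^2 + v^4 + v^6)) v :=
      (h1.sub h2).sub h3
    rw [hd.deriv]
    have hA : (1:ℝ)+v ≠ 0 := by linarith
    have hB : (1:ℝ)-v ≠ 0 := by linarith
    have hC : (0:ℝ) < (1+v)*(1-v) := by nlinarith
    have key : 1/(1+v) - (-(1/(1-v))) - 2*(1 + v^2 + v^4 + v^6)
        = 2*v^8/((1+v)*(1-v)) := by
      rw [eq_div_iff hC.ne']
      field_simp
      ring
    rw [key]
    exact div_pos (by positivity) hC
  have hcont : ContinuousOn h (Set.Ico (0:ℝ) 1) := by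
    apply ContinuousOn.sub
    apply ContinuousOn.sub
    · exact (continuousOn_const.add continuousOn_id).log
        (fun v hv => by have := hv.1; dsimp; linarith)
    · exact (continuousOn_const.sub continuousOn_id).log
        (fun v hv => by have := hv.2; dsimp; linarith)
    · fun_prop
  have hmono : StrictMonoOn h (Set.Ico (0:ℝ) 1) := by
    apply strictMonoOn_of_deriv_pos (convex_Ico 0 1) hcont
    rw [interior_Ico]
    exact hderiv
  have h0 : h 0 = 0 := by simp [hh]
  have := hmono (Set.left_mem_Ico.mpr one_pos) ⟨hu0.le, hu1⟩ hu0
  rw [h0] at this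
  have hlog : Real.log ((1+u)/(1-u)) = Real.log (1+u) - Real.log (1-u) :=
    Real.log_div (by linarith) (by linarith)
  rw [hlog]
  simpa [hh] using this

lemma log_ratio_lb {x : ℝ} (hx : 0 < x) :
    2*(1/(2*x+1) + (1/(2*x+1))^3/3 + (1/(2*x+1))^5/5 + (1/(2*x+1))^7/7)
      < Real.log (x+1) - Real.log x := by
  set u : ℝ := 1/(2*x+1) with hu
  have hu0 : 0 < u := by positivity
  have hu1 : u < 1 := by
    rw [hu, div_lt_one (by linarith)]; linarith
  have key := artanh_lb hu0 hu1
  have h2x : (2*x+1:ℝ) ≠ 0 := by positivity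
  have heq : (1+u)/(1-u) = (x+1)/x := by
    rw [hu]
    have hnum : (1:ℝ) + 1/(2*x+1) = (2*x+2)/(2*x+1) := by field_simp; ring
    have hden : (1:ℝ) - 1/(2*x+1) = (2*x)/(2*x+1) := by field_simp; ring
    rw [hnum, hden]
    rw [div_div_div_eq]
    rw [div_eq_div_iff (by positivity) (by positivity)]
    ring
  rw [heq] at key
  rwa [Real.log_div (by linarith) hx.ne'] at key

lemma g_pos {x : ℝ} (hx : 0 < x) :
    0 < (x + 1/2) * (Real.log (x+1) - Real.log x) - 1 := by
  have h := log_ratio_lb hx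
  set u : ℝ := 1/(2*x+1) with hu
  have hu0 : 0 < u := by positivity
  have h2 : 2 * (x + 1/2) * u = 1 := by rw [hu]; field_simp
  nlinarith [pow_pos hu0 3, pow_pos hu0 5, pow_pos hu0 7]

noncomputable def psi (x : ℝ) : ℝ :=
  Real.log (Qp x) - Real.log (Qp (x+1)) - 4*x*(Real.log (x+1) - Real.log x) + 4

lemma psi_hasDeriv {x : ℝ} (hx : 0 < x) :
    HasDerivAt psi ((2*x+1/3)/Qp x - (2*(x+1)+1/3)/Qp (x+1)
      - (4*(Real.log (x+1) - Real.log x) + 4*x*(1/(x+1) - 1/x))) x := by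
  have hq : HasDerivAt Qp (2*x+1/3) x := by
    unfold Qp
    have := ((hasDerivAt_pow 2 x).add ((hasDerivAt_id x).div_const 3)).add_const (1/18)
    simpa using this
  have hq1 : HasDerivAt (fun x => Qp (x+1)) (2*(x+1)+1/3) x := by
    have hinner : HasDerivAt (fun x : ℝ => x+1) 1 x := (hasDerivAt_id x).add_const 1
    have houter : HasDerivAt Qp (2*(x+1)+1/3) (x+1) := by
      unfold Qp
      have := ((hasDerivAt_pow 2 (x+1)).add ((hasDerivAt_id (x+1)).div_const 3)).add_const (1/18)
      simpa using this
    simpa [Function.comp_def] using houter.comp x hinner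
  have hl1 : HasDerivAt (fun x : ℝ => Real.log (Qp x)) ((2*x+1/3)/Qp x) x := by
    have := hq.log (Qp_pos x).ne'
    simpa [div_eq_mul_inv] using this
  have hl2 : HasDerivAt (fun x : ℝ => Real.log (Qp (x+1))) ((2*(x+1)+1/3)/Qp (x+1)) x := by
    have := hq1.log (Qp_pos (x+1)).ne'
    simpa [div_eq_mul_inv] using this
  have hlx1 : HasDerivAt (fun x : ℝ => Real.log (x+1)) (1/(x+1)) x := by
    have := ((hasDerivAt_id x).add_const 1).log (by linarith : x+1 ≠ 0)
    simpa using this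
  have hlx : HasDerivAt (fun x : ℝ => Real.log x) (1/x) x := by
    simpa [one_div] using Real.hasDerivAt_log hx.ne'
  have hprod : HasDerivAt (fun x : ℝ => 4*x*(Real.log (x+1) - Real.log x))
      (4*(Real.log (x+1) - Real.log x) + 4*x*(1/(x+1) - 1/x)) x := by
    have hc : HasDerivAt (fun x : ℝ => 4*x) 4 x := by
      simpa using (hasDerivAt_id x).const_mul 4
    have := hc.mul (hlx1.sub hlx)
    exact this.congr_deriv rfl
  exact ((hl1.sub hl2).sub hprod).add_const 4

lemma psi_deriv_neg {x : ℝ} (hx : 0 < x) :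
    (2*x+1/3)/Qp x - (2*(x+1)+1/3)/Qp (x+1)
      - (4*(Real.log (x+1) - Real.log x) + 4*x*(1/(x+1) - 1/x)) < 0 := by
  have hlog := log_ratio_lb hx
  set u : ℝ := 1/(2*x+1) with hu
  have hx1 : (0:ℝ) < x + 1 := by linarith
  have h2x : (0:ℝ) < 2*x+1 := by linarith
  have hrot : 4*x*(1/(x+1) - 1/x) = -(4/(x+1)) := by
    field_simp
    ring
  rw [hrot]
  have hq1 : (x:ℝ)^2+x/3+1/18 ≠ 0 := ne_of_gt (by have := Qp_pos x; unfold Qp at this; linarith)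
  have hq2 : ((x+1):ℝ)^2+(x+1)/3+1/18 ≠ 0 := ne_of_gt (by have := Qp_pos (x+1); unfold Qp at this; linarith)
  have key : (2*x+1/3)/Qp x - (2*(x+1)+1/3)/Qp (x+1) + 4/(x+1)
      - 8*(u + u^3/3 + u^5/5 + u^7/7)
      = -(3340 + 35469*x + 173660*x^2 + 463670*x^3 + 731664*x^4 + 678304*x^5
          + 334656*x^6 + 64512*x^7)
        / (8505 * Qp x * Qp (x+1) * (x+1) * (2*x+1)^7) := by
    unfold Qp
    rw [hu]
    field_simp
    ring
  have hneg : (2*x+1/3)/Qp x - (2*(x+1)+1/3)/Qp (x+1) + 4/(x+1)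
      - 8*(u + u^3/3 + u^5/5 + u^7/7) < 0 := by
    rw [key]
    apply div_neg_of_neg_of_pos
    · nlinarith [pow_pos hx 2, pow_pos hx 3, pow_pos hx 4, pow_pos hx 5,
        pow_pos hx 6, pow_pos hx 7]
    · have := Qp_pos x
      have := Qp_pos (x+1)
      positivity
  nlinarith [hlog, hneg]

lemma psi_tendsto : Tendsto psi atTop (𝓝 0) := by
  have h1 : Tendsto (fun x : ℝ => x * Real.log (1 + 1/x)) atTop (𝓝 1) := by
    simpa using Real.tendsto_mul_log_one_add_div_atTop 1
  have hinv : Tendsto (fun x : ℝ => x⁻¹) atTop (𝓝 (0:ℝ)) := tendsto_inv_atTop_zero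
  have hn : Tendsto (fun x : ℝ => 1 + x⁻¹/3 + (x⁻¹)^2/18) atTop (𝓝 1) := by
    have := (tendsto_const_nhds (α := ℝ) (x := (1:ℝ))).add
      ((hinv.div_const 3).add ((hinv.pow 2).div_const 18))
    norm_num at this
    convert this using 2 with x
    ring
  have hd : Tendsto (fun x : ℝ => 1 + 7*x⁻¹/3 + 25*(x⁻¹)^2/18) atTop (𝓝 1) := by
    have := (tendsto_const_nhds (α := ℝ) (x := (1:ℝ))).add
      (((hinv.const_mul 7).div_const 3).add (((hinv.pow 2).const_mul 25).div_const 18))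
    norm_num at this
    convert this using 2 with x
    ring
  have hcore : Tendsto (fun x : ℝ => Qp x / Qp (x+1)) atTop (𝓝 1) := by
    have hq := hn.div hd one_ne_zero
    norm_num at hq
    apply hq.congr'
    filter_upwards [eventually_gt_atTop (0:ℝ)] with x hx
    have hden : (0:ℝ) < 1 + 7*x⁻¹/3 + 25*(x^2)⁻¹/18 := by positivity
    show (1 + x⁻¹/3 + (x^2)⁻¹/18) / (1 + 7*x⁻¹/3 + 25*(x^2)⁻¹/18) = Qp x / Qp (x+1)
    rw [div_eq_div_iff hden.ne' (Qp_pos (x+1)).ne']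
    unfold Qp
    field_simp
    ring
  have h2 : Tendsto (fun x : ℝ => Real.log (Qp x / Qp (x+1))) atTop (𝓝 0) := by
    have hc := (Real.continuousAt_log one_ne_zero).tendsto
    have := hc.comp hcore
    simpa [Function.comp_def] using this
  have main : Tendsto (fun x : ℝ => Real.log (Qp x / Qp (x+1)) - 4*(x * Real.log (1 + 1/x)) + 4)
      atTop (𝓝 0) := by
    have := (h2.sub (h1.const_mul 4)).add_const 4
    norm_num at this
    exact this.congr (fun x => by rw [one_div])
  apply main.congr'
  filter_upwards [eventually_gt_atTop (0:ℝ)] with x hx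
  unfold psi
  rw [Real.log_div (Qp_pos x).ne' (Qp_pos (x+1)).ne']
  have : Real.log (1 + 1/x) = Real.log (x+1) - Real.log x := by
    rw [show (1 : ℝ) + 1/x = (x+1)/x by field_simp]
    exact Real.log_div (by linarith) hx.ne'
  rw [this]
  ring

lemma psi_pos {x : ℝ} (hx : 0 < x) : 0 < psi x := by
  have hanti : StrictAntiOn psi (Set.Ioi (0:ℝ)) := by
    apply strictAntiOn_of_deriv_neg (convex_Ioi 0)
    · exact fun y hy => ((psi_hasDeriv hy).continuousAt).continuousWithinAt
    · intro y hy
      rw [interior_Ioi] at hy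
      rw [(psi_hasDeriv hy).deriv]
      exact psi_deriv_neg hy
  have h0 : 0 ≤ psi (x+1) := by
    have hev : ∀ᶠ y in atTop, psi y ≤ psi (x+1) := by
      filter_upwards [eventually_gt_atTop (x+1)] with y hy
      exact (hanti (by simp only [Set.mem_Ioi]; linarith) (by simp only [Set.mem_Ioi]; linarith) hy).le
    exact le_of_tendsto psi_tendsto hev
  have hlt := hanti (by simp [hx]) (by simp only [Set.mem_Ioi]; linarith) (by linarith : x < x+1)
  linarith

lemma delta_neg {x : ℝ} (hx : 0 < x) :
    x*(Real.log (x+1) - Real.log x) - 1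
      + (Real.log (Qp (x+1)) - Real.log (Qp x))/4 < 0 := by
  have := psi_pos hx
  unfold psi at this
  linarith

noncomputable def Ff (y : ℝ) : ℝ :=
  Real.log (Real.Gamma (y+1)) - (y * Real.log y - y + Real.log (2*Real.pi*y)/2)

noncomputable def Gg (y : ℝ) : ℝ :=
  Real.log (Real.Gamma (y+1)) - (y * Real.log y - y + Real.log (2*Real.pi)/2
    + Real.log (Qp y)/4)

lemma log_Gamma_rec {y : ℝ} (hy : 0 < y) :
    Real.log (Real.Gamma (y+1+1)) = Real.log (y+1) + Real.log (Real.Gamma (y+1)) := by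
  rw [Real.Gamma_add_one (by linarith : y+1 ≠ 0)]
  exact Real.log_mul (by linarith : y+1 ≠ 0) (Real.Gamma_pos_of_pos (by linarith)).ne'

lemma Ff_sub {y : ℝ} (hy : 0 < y) :
    Ff y = ((y + 1/2) * (Real.log (y+1) - Real.log y) - 1) + Ff (y+1) := by
  unfold Ff
  rw [log_Gamma_rec hy]
  have h1 : Real.log (2*Real.pi*y) = Real.log (2*Real.pi) + Real.log y :=
    Real.log_mul (by positivity) hy.ne'
  have h2 : Real.log (2*Real.pi*(y+1)) = Real.log (2*Real.pi) + Real.log (y+1) :=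
    Real.log_mul (by positivity) (by linarith)
  rw [h1, h2]
  ring

lemma Gg_sub {y : ℝ} (hy : 0 < y) :
    Gg y = (y*(Real.log (y+1) - Real.log y) - 1
      + (Real.log (Qp (y+1)) - Real.log (Qp y))/4) + Gg (y+1) := by
  unfold Gg
  rw [log_Gamma_rec hy]
  ring

lemma Ff_pos_step {y : ℝ} (hy : 0 < y) : Ff (y+1) < Ff y := by
  rw [Ff_sub hy]
  have := g_pos hy
  linarith

lemma Gg_pos_step {y : ℝ} (hy : 0 < y) : Gg y < Gg (y+1) := by
  rw [Gg_sub hy]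
  have := delta_neg hy
  linarith

lemma Gg_le_Ff {y : ℝ} (hy : 0 < y) : Gg y ≤ Ff y := by
  unfold Gg Ff
  have h1 : Real.log (2*Real.pi*y) = Real.log (2*Real.pi) + Real.log y :=
    Real.log_mul (by positivity) hy.ne'
  rw [h1]
  have h2 : 2 * Real.log y ≤ Real.log (Qp y) := by
    rw [show (2:ℝ) * Real.log y = Real.log (y^2) by rw [Real.log_pow]; norm_num]
    apply Real.log_le_log (by positivity)
    unfold Qp
    nlinarith
  linarith

lemma Ff_nat {m : ℕ} (hm : 1 ≤ m) :
    Ff m = Real.log (Stirling.stirlingSeq m) - Real.log (Real.sqrt Real.pi) := by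
  have hm0 : (0:ℝ) < m := by exact_mod_cast hm
  have hfact : Real.Gamma ((m:ℝ)+1) = Nat.factorial m := by
    exact_mod_cast Real.Gamma_nat_eq_factorial m
  unfold Ff
  rw [hfact, Stirling.log_stirlingSeq_formula]
  have h1 : Real.log ((m:ℝ)/Real.exp 1) = Real.log m - 1 := by
    rw [Real.log_div hm0.ne' (Real.exp_ne_zero 1), Real.log_exp]
  have h2 : Real.log (2*Real.pi*m) = Real.log Real.pi + Real.log (2*m) := by
    rw [show (2*Real.pi*(m:ℝ)) = Real.pi * (2*m) by ring]
    exact Real.log_mul Real.pi_ne_zero (by positivity)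
  have h3 : Real.log (Real.sqrt Real.pi) = Real.log Real.pi / 2 :=
    Real.log_sqrt Real.pi_pos.le
  rw [h1, h2, h3]
  ring

lemma sqrt_pi_pos : (0:ℝ) < Real.sqrt Real.pi := Real.sqrt_pos.mpr Real.pi_pos

lemma log_stirling_tendsto :
    Tendsto (fun n : ℕ => Real.log (Stirling.stirlingSeq n)) atTop
      (𝓝 (Real.log (Real.sqrt Real.pi))) :=
  ((Real.continuousAt_log sqrt_pi_pos.ne').tendsto).comp Stirling.tendsto_stirlingSeq_sqrt_pi

lemma Ff_nat_tendsto : Tendsto (fun n : ℕ => Ff n + 1/n) atTop (𝓝 0) := by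
  have h1 : Tendsto (fun n : ℕ => Ff n) atTop (𝓝 0) := by
    have := log_stirling_tendsto.sub
      (tendsto_const_nhds (x := Real.log (Real.sqrt Real.pi)))
    rw [sub_self] at this
    apply this.congr'
    filter_upwards [eventually_ge_atTop 1] with m hm
    exact (Ff_nat hm).symm
  have h2 : Tendsto (fun n : ℕ => (1:ℝ)/n) atTop (𝓝 0) := tendsto_one_div_atTop_nhds_zero_nat
  simpa using h1.add h2

lemma Ff_nat_nonneg {m : ℕ} (hm : 1 ≤ m) : 0 ≤ Ff m := by
  rw [Ff_nat hm]
  rw [sub_nonneg]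
  have hanti := Stirling.log_stirlingSeq'_antitone
  have htend : Tendsto (Real.log ∘ Stirling.stirlingSeq ∘ Nat.succ) atTop
      (𝓝 (Real.log (Real.sqrt Real.pi))) := by
    apply log_stirling_tendsto.comp
    exact tendsto_add_atTop_nat 1
  obtain ⟨k, rfl⟩ : ∃ k, m = k + 1 := ⟨m - 1, (Nat.succ_pred_eq_of_pos hm).symm⟩
  exact hanti.le_of_tendsto htend k

lemma log_Gamma_feq : ∀ {y : ℝ}, 0 < y →
    (Real.log ∘ Real.Gamma) (y + 1) = (Real.log ∘ Real.Gamma) y + Real.log y := by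
  intro y hy
  simp only [Function.comp]
  rw [Real.Gamma_add_one hy.ne', Real.log_mul hy.ne' (Real.Gamma_pos_of_pos hy).ne']
  ring

lemma Ff_interp_le {m : ℕ} (hm : 1 ≤ m) {t : ℝ} (ht0 : 0 < t) (ht1 : t ≤ 1) :
    Ff ((m:ℝ) + t) ≤ Ff m + 1/m := by
  have hm0 : (0:ℝ) < m := by exact_mod_cast hm
  set y : ℝ := (m:ℝ) + t with hy
  have hy0 : (0:ℝ) < y := by positivity
  have hchord : Real.log (Real.Gamma (y+1))
      ≤ Real.log (Real.Gamma ((m:ℝ)+1)) + t * Real.log ((m:ℝ)+1) := by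
    have := Real.BohrMollerup.f_add_nat_le Real.convexOn_log_Gamma log_Gamma_feq
      (n := m+1) (Nat.succ_ne_zero m) ht0 ht1
    have hfeq := log_Gamma_feq hm0
    push_cast at this
    simp only [Function.comp] at this
    calc Real.log (Real.Gamma (y+1)) = Real.log (Real.Gamma ((m:ℝ)+1+t)) := by rw [hy]; ring_nf
      _ ≤ Real.log (Real.Gamma ((m:ℝ)+1)) + t * Real.log ((m:ℝ)+1) := this
  -- y log y ≥ m log m + t log m + t
  have ha2 : (m:ℝ)*Real.log m + t*Real.log m + t ≤ y * Real.log y := by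
    have hmy : (0:ℝ) < (m:ℝ)/y := by positivity
    have h := Real.log_le_sub_one_of_pos hmy
    rw [Real.log_div hm0.ne' hy0.ne'] at h
    have h2 := mul_le_mul_of_nonneg_left h hy0.le
    have h3 : y * ((m:ℝ)/y - 1) = (m:ℝ) - y := by field_simp
    rw [h3] at h2
    have hexp : y * Real.log m = (m:ℝ)*Real.log m + t*Real.log m := by rw [hy]; ring
    nlinarith [h2, hexp]
  have ha3 : Real.log (2*Real.pi*(m:ℝ)) ≤ Real.log (2*Real.pi*y) := by
    apply Real.log_le_log (by positivity)
    nlinarith [Real.pi_pos]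
  have ha4 : t*(Real.log ((m:ℝ)+1) - Real.log m) ≤ 1/m := by
    have hd0 : 0 ≤ Real.log ((m:ℝ)+1) - Real.log m := by
      have := Real.log_le_log hm0 (by linarith : (m:ℝ) ≤ m+1)
      linarith
    have hd1 : Real.log ((m:ℝ)+1) - Real.log m ≤ 1/m := by
      have hq : (0:ℝ) < ((m:ℝ)+1)/m := by positivity
      have h := Real.log_le_sub_one_of_pos hq
      rw [Real.log_div (by linarith) hm0.ne'] at h
      have : ((m:ℝ)+1)/m - 1 = 1/m := by field_simp; ring
      linarith [h, this.symm.le, this.le]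
    nlinarith
  have ha4' : t*Real.log ((m:ℝ)+1) - t*Real.log m ≤ 1/m := by nlinarith [ha4]
  unfold Ff
  clear_value y
  subst hy
  linarith [hchord, ha2, ha3, ha4']

lemma Ff_interp_ge {m : ℕ} (hm : 1 ≤ m) {t : ℝ} (ht0 : 0 < t) (ht1 : t ≤ 1) :
    Ff m - 3/(2*m) ≤ Ff ((m:ℝ) + t) := by
  have hm0 : (0:ℝ) < m := by exact_mod_cast hm
  set y : ℝ := (m:ℝ) + t with hy
  have hy0 : (0:ℝ) < y := by positivity
  have hchord : Real.log (Real.Gamma ((m:ℝ)+1)) + t * Real.log m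
      ≤ Real.log (Real.Gamma (y+1)) := by
    have := Real.BohrMollerup.f_add_nat_ge Real.convexOn_log_Gamma log_Gamma_feq
      (n := m+1) (by omega : 2 ≤ m+1) ht0
    push_cast at this
    simp only [Function.comp] at this
    have e1 : ((m:ℝ)+1-1) = (m:ℝ) := by ring
    rw [e1] at this
    have e2 : ((m:ℝ)+1+t) = y+1 := by rw [hy]; ring
    rw [e2] at this
    exact this
  have hb2 : y * Real.log y ≤ y*Real.log m + y*t/m := by
    have hq : (0:ℝ) < y/(m:ℝ) := by positivity
    have h := Real.log_le_sub_one_of_pos hq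
    rw [Real.log_div hy0.ne' hm0.ne'] at h
    have h2 := mul_le_mul_of_nonneg_left h hy0.le
    have h3 : y * (y/(m:ℝ) - 1) = y*t/m := by rw [hy]; field_simp; ring
    rw [h3] at h2
    have hexp : y * Real.log m = (m:ℝ)*Real.log m + t*Real.log m := by rw [hy]; ring
    nlinarith [h2, hexp]
  have hb3 : Real.log (2*Real.pi*y) - Real.log (2*Real.pi*(m:ℝ)) ≤ t/m := by
    have h1 : Real.log (2*Real.pi*y) = Real.log (2*Real.pi) + Real.log y :=
      Real.log_mul (by positivity) hy0.ne'
    have h2 : Real.log (2*Real.pi*(m:ℝ)) = Real.log (2*Real.pi) + Real.log m :=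
      Real.log_mul (by positivity) hm0.ne'
    have hq : (0:ℝ) < y/(m:ℝ) := by positivity
    have h := Real.log_le_sub_one_of_pos hq
    rw [Real.log_div hy0.ne' hm0.ne'] at h
    have h3 : y/(m:ℝ) - 1 = t/m := by rw [hy]; field_simp; ring
    rw [h1, h2]
    linarith [h, h3.le, h3.symm.le]
  have hym : y*t/m = t + t^2/m := by rw [hy]; field_simp
  have htm : t^2/m ≤ 1/m := by
    gcongr
    nlinarith
  have htm2 : t/m ≤ 1/m := by gcongr
  have hexp : y * Real.log m = (m:ℝ)*Real.log m + t*Real.log m := by rw [hy]; ring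
  unfold Ff
  have h32 : 3/(2*(m:ℝ)) = (3/2)*(1/m) := by ring
  clear_value y
  subst hy
  linarith [hchord, hb2, hb3, hym, htm, htm2, hexp, h32]

lemma ceil_decomp {y : ℝ} (hy : 2 ≤ y) :
    ∃ m : ℕ, 1 ≤ m ∧ y - 1 ≤ (m:ℝ) ∧ ∃ t : ℝ, 0 < t ∧ t ≤ 1 ∧ y = (m:ℝ) + t := by
  have hy0 : (0:ℝ) ≤ y := by linarith
  have hc1 : y ≤ (⌈y⌉₊ : ℝ) := Nat.le_ceil y
  have hc2 : (⌈y⌉₊ : ℝ) < y + 1 := Nat.ceil_lt_add_one hy0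
  have hge2 : 2 ≤ ⌈y⌉₊ := by
    have : (2:ℝ) ≤ (⌈y⌉₊:ℝ) := le_trans hy hc1
    exact_mod_cast this
  refine ⟨⌈y⌉₊ - 1, by omega, ?_, y - ((⌈y⌉₊:ℝ) - 1), ?_, ?_, ?_⟩
  · have hcast : ((⌈y⌉₊ - 1 : ℕ):ℝ) = (⌈y⌉₊:ℝ) - 1 := by
      push_cast [Nat.cast_sub (by omega : 1 ≤ ⌈y⌉₊)]
      ring
    rw [hcast]; linarith
  · linarith
  · linarith
  · have hcast : ((⌈y⌉₊ - 1 : ℕ):ℝ) = (⌈y⌉₊:ℝ) - 1 := by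
      push_cast [Nat.cast_sub (by omega : 1 ≤ ⌈y⌉₊)]
      ring
    rw [hcast]; ring

lemma Ff_ge_general {y : ℝ} (hy : 2 ≤ y) : -3/(2*(y-1)) ≤ Ff y := by
  obtain ⟨m, hm1, hmy, t, ht0, ht1, rfl⟩ := ceil_decomp hy
  have hm0 : (0:ℝ) < m := by exact_mod_cast hm1
  have h1 := Ff_interp_ge hm1 ht0 ht1
  have h2 := Ff_nat_nonneg hm1
  have h3 : 3/(2*(m:ℝ)) ≤ 3/(2*((m:ℝ)+t-1)) := by
    apply div_le_div_of_nonneg_left (by norm_num) (by linarith) (by linarith)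
  have : -3/(2*((m:ℝ)+t-1)) ≤ -3/(2*(m:ℝ)) := by
    rw [neg_div, neg_div]
    linarith
  have h4 : -3/(2*((m:ℝ)+t-1)) = -(3/(2*((m:ℝ)+t-1))) := by rw [neg_div]
  have h5 : -3/(2*(m:ℝ)) = -(3/(2*(m:ℝ))) := by rw [neg_div]
  linarith

lemma Ff_le_general {y : ℝ} (hy : 2 ≤ y) :
    ∃ m : ℕ, y - 1 ≤ (m:ℝ) ∧ 1 ≤ m ∧ Ff y ≤ Ff m + 1/m := by
  obtain ⟨m, hm1, hmy, t, ht0, ht1, rfl⟩ := ceil_decomp hy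
  exact ⟨m, hmy, hm1, Ff_interp_le hm1 ht0 ht1⟩

lemma Ff_ge_shift {y : ℝ} (hy : 0 < y) (n : ℕ) : Ff (y + n) ≤ Ff y := by
  induction n with
  | zero => simp
  | succ n ih =>
    have h1 : Ff (y + n + 1) < Ff (y + n) := Ff_pos_step (by positivity)
    have h2 : y + ((n:ℝ)+1) = y + n + 1 := by ring
    push_cast
    rw [h2]
    linarith

lemma Gg_le_shift {y : ℝ} (hy : 0 < y) (n : ℕ) : Gg y ≤ Gg (y + n) := by
  induction n with
  | zero => simp
  | succ n ih =>
    have h1 : Gg (y + n) < Gg (y + n + 1) := Gg_pos_step (by positivity)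
    have h2 : y + ((n:ℝ)+1) = y + n + 1 := by ring
    push_cast
    rw [h2]
    linarith

lemma Ff_nonneg_all {y : ℝ} (hy : 0 < y) : 0 ≤ Ff y := by
  by_contra hneg
  push_neg at hneg
  set c : ℝ := -Ff y with hc
  have hc0 : 0 < c := by simp [hc]; linarith
  obtain ⟨n, hn⟩ := exists_nat_gt (max (3/(2*c) + 1 - y) (2 - y))
  have hn1 : 3/(2*c) + 1 - y < n := lt_of_le_of_lt (le_max_left _ _) hn
  have hn2 : 2 - y < n := lt_of_le_of_lt (le_max_right _ _) hn
  have hy2 : 2 ≤ y + n := by linarith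
  have h1 := Ff_ge_shift hy n
  have h2 := Ff_ge_general hy2
  have h3 : -3/(2*(y + n - 1)) > -c := by
    have hX : 3/(2*c) < y + n - 1 := by linarith
    have hden : (0:ℝ) < y + n - 1 := by
      have : (0:ℝ) < 3/(2*c) := by positivity
      linarith
    rw [gt_iff_lt, neg_lt, neg_div, neg_neg]
    rw [div_lt_iff₀ (by positivity)]
    rw [div_lt_iff₀ (by positivity)] at hX
    nlinarith
  have : -c ≤ Ff y := by linarith
  simp [hc] at this
  linarith

lemma Ff_pos_all {x : ℝ} (hx : 0 < x) : 0 < Ff x := by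
  rw [Ff_sub hx]
  have h1 := g_pos hx
  have h2 := Ff_nonneg_all (by linarith : (0:ℝ) < x + 1)
  linarith

lemma Gg_nonpos {y : ℝ} (hy : 0 < y) : Gg y ≤ 0 := by
  by_contra hpos
  push_neg at hpos
  have hev : ∀ᶠ n : ℕ in atTop, Ff n + 1/n < Gg y :=
    Ff_nat_tendsto.eventually_lt_const hpos
  obtain ⟨N, hN⟩ := hev.exists_forall_of_atTop
  have hk2 : (2:ℝ) ≤ y + (N + 2 : ℕ) := by push_cast; linarith
  have hshift := Gg_le_shift hy (N + 2)
  have hGF := Gg_le_Ff (by positivity : (0:ℝ) < y + ((N+2:ℕ):ℝ))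
  obtain ⟨m, hm1, hm2, hm3⟩ := Ff_le_general hk2
  have hmN : N ≤ m := by
    have : (N:ℝ) < (m:ℝ) := by push_cast at hm1 ⊢; linarith
    exact_mod_cast this.le
  have := hN m hmN
  linarith

lemma Gg_neg {x : ℝ} (hx : 0 < x) : Gg x < 0 := by
  rw [Gg_sub hx]
  have h1 := delta_neg hx
  have h2 := Gg_nonpos (by linarith : (0:ℝ) < x + 1)
  linarith

theorem stmt_14 (x : ℝ) (hx : 0 < x) :
    ((18:ℝ) ^ ((1:ℝ)/4) / Real.sqrt (2 * Real.pi)) * x ^ x * Real.exp (-x) *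
        (x^2 + x/3 + 1/18) ^ ((1:ℝ)/4) < Real.Gamma (x + 1) ∧
    Real.Gamma (x + 1) <
      Real.sqrt (2 * Real.pi) * x ^ x * Real.exp (-x) *
        (x^2 + x/3 + 1/18) ^ ((1:ℝ)/4) := by
  have hQ : (0:ℝ) < x^2 + x/3 + 1/18 := Qp_pos x
  have h2π : (0:ℝ) < 2*Real.pi := by positivity
  have hx1 : (0:ℝ) < x + 1 := by linarith
  have hΓpos := Real.Gamma_pos_of_pos hx1
  have hpi := Real.pi_gt_d6
  constructor
  · -- lower bound
    rcases le_or_gt (1/30 : ℝ) x with hx30 | hx30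
    · -- case x ≥ 1/30 : use Ff > 0
      have hF := Ff_pos_all hx
      unfold Ff at hF
      have hΓ : Real.exp (x*Real.log x - x + Real.log (2*Real.pi*x)/2) < Real.Gamma (x+1) := by
        rw [← Real.exp_log hΓpos]
        exact Real.exp_lt_exp.mpr (by linarith)
      have hexp_eq : Real.exp (x*Real.log x - x + Real.log (2*Real.pi*x)/2)
          = x^x * Real.exp (-x) * Real.sqrt (2*Real.pi*x) := by
        rw [show x*Real.log x - x + Real.log (2*Real.pi*x)/2
            = (x*Real.log x) + (-x) + (Real.log (2*Real.pi*x)/2) by ring]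
        rw [Real.exp_add, Real.exp_add]
        congr 1
        · congr 1
          rw [Real.rpow_def_of_pos hx, mul_comm]
        · rw [Real.sqrt_eq_rpow, Real.rpow_def_of_pos (by positivity), mul_one_div]
      have hkey : (18:ℝ)^((1:ℝ)/4) * (x^2+x/3+1/18)^((1:ℝ)/4)
          ≤ Real.sqrt (2*Real.pi) * Real.sqrt (2*Real.pi*x) := by
        have hmul : (18:ℝ)^((1:ℝ)/4) * (x^2+x/3+1/18)^((1:ℝ)/4)
            = (18*(x^2+x/3+1/18))^((1:ℝ)/4) :=
          (Real.mul_rpow (by norm_num) hQ.le).symm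
        have hsq : Real.sqrt (2*Real.pi) * Real.sqrt (2*Real.pi*x)
            = Real.sqrt ((2*Real.pi)*(2*Real.pi*x)) := (Real.sqrt_mul h2π.le _).symm
        rw [hmul, hsq]
        set B : ℝ := (2*Real.pi)*(2*Real.pi*x) with hB
        have hBpos : (0:ℝ) < B := by rw [hB]; positivity
        have hpi2 : (9.8:ℝ) < Real.pi^2 := by nlinarith
        have hpi4 : (96:ℝ) < (Real.pi^2)^2 := by nlinarith
        have h18Q : 18*(x^2+x/3+1/18) ≤ B^2 := by
          rw [hB]
          have hBsq : ((2*Real.pi)*(2*Real.pi*x))^2 = 16*((Real.pi^2)^2)*x^2 := by ring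
          rw [hBsq]
          nlinarith [mul_le_mul_of_nonneg_right hpi4.le (sq_nonneg x), sq_nonneg (x - 1/30)]
        calc (18*(x^2+x/3+1/18))^((1:ℝ)/4)
            ≤ (B^2)^((1:ℝ)/4) := Real.rpow_le_rpow (by positivity) h18Q (by norm_num)
          _ = B^((1:ℝ)/2) := by
              rw [← Real.rpow_natCast B 2, ← Real.rpow_mul hBpos.le]
              norm_num
          _ = Real.sqrt B := (Real.sqrt_eq_rpow B).symm
      have hXpos : (0:ℝ) < x^x * Real.exp (-x) := by
        have := Real.rpow_pos_of_pos hx x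
        positivity
      have h6 : (18:ℝ)^((1:ℝ)/4) * (x^2+x/3+1/18)^((1:ℝ)/4) / Real.sqrt (2*Real.pi)
          ≤ Real.sqrt (2*Real.pi*x) := by
        rw [div_le_iff₀ (Real.sqrt_pos.mpr h2π)]
        rw [mul_comm (Real.sqrt (2*Real.pi*x)) (Real.sqrt (2*Real.pi))] at *
        linarith [hkey]
      calc ((18:ℝ) ^ ((1:ℝ)/4) / Real.sqrt (2 * Real.pi)) * x ^ x * Real.exp (-x) *
            (x^2 + x/3 + 1/18) ^ ((1:ℝ)/4)
          = (x^x * Real.exp (-x)) *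
            ((18:ℝ)^((1:ℝ)/4) * (x^2+x/3+1/18)^((1:ℝ)/4) / Real.sqrt (2*Real.pi)) := by
            ring
        _ ≤ (x^x * Real.exp (-x)) * Real.sqrt (2*Real.pi*x) :=
            mul_le_mul_of_nonneg_left h6 hXpos.le
        _ = Real.exp (x*Real.log x - x + Real.log (2*Real.pi*x)/2) := by
            rw [hexp_eq]
        _ < Real.Gamma (x+1) := hΓ
    · -- case x < 1/30 : Gamma(x+1) ≥ 1/2 > RHS
      have hgam_half : (1/2:ℝ) ≤ Real.Gamma (x+1) := by
        have hconv := Real.convexOn_log_Gamma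
        have ha : (x+1:ℝ) ∈ Set.Ioi (0:ℝ) := Set.mem_Ioi.mpr hx1
        have hc : (3:ℝ) ∈ Set.Ioi (0:ℝ) := Set.mem_Ioi.mpr (by norm_num)
        have h2x : (0:ℝ) < 2 - x := by linarith
        have hl0 : (0:ℝ) < 1/(2-x) := by positivity
        have hm0 : (0:ℝ) ≤ (1-x)/(2-x) := div_nonneg (by linarith) (by linarith)
        have hsum : 1/(2-x) + (1-x)/(2-x) = 1 := by field_simp; ring
        have hcomb : (1/(2-x)) • (x+1) + ((1-x)/(2-x)) • (3:ℝ) = 2 := by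
          simp only [smul_eq_mul]
          field_simp
          ring
        have hcx := hconv.2 ha hc hl0.le hm0 hsum
        rw [hcomb] at hcx
        simp only [Function.comp, smul_eq_mul] at hcx
        have hG2 : Real.Gamma 2 = 1 := Real.Gamma_two
        have hG3 : Real.Gamma 3 = 2 := by
          rw [show (3:ℝ) = 2+1 by norm_num, Real.Gamma_add_one (by norm_num : (2:ℝ) ≠ 0), hG2]
          norm_num
        rw [hG2, hG3, Real.log_one] at hcx
        -- hcx : 0 ≤ (1/(2-x)) * log Γ(x+1) + ((1-x)/(2-x)) * log 2
        have hlog2pos : (0:ℝ) ≤ Real.log 2 := Real.log_nonneg (by norm_num)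
        have hstep : -Real.log 2 ≤ Real.log (Real.Gamma (x+1)) := by
          have hml : (1-x)/(2-x) ≤ 1/(2-x) := by
            rw [div_le_div_iff₀ h2x h2x]
            nlinarith
          have h8 : (1-x)/(2-x) * Real.log 2 ≤ 1/(2-x) * Real.log 2 :=
            mul_le_mul_of_nonneg_right hml hlog2pos
          have h9 : (1/(2-x)) * (-Real.log 2) ≤ (1/(2-x)) * Real.log (Real.Gamma (x+1)) := by
            nlinarith [hcx, h8]
          exact (mul_le_mul_iff_right₀ hl0).mp h9
        have := Real.exp_le_exp.mpr hstep
        rw [Real.exp_log hΓpos] at this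
        rw [Real.exp_neg, Real.exp_log (by norm_num : (0:ℝ) < 2)] at this
        linarith
      have hxx : x^x ≤ 1 := Real.rpow_le_one hx.le (by linarith) hx.le
      have hex : Real.exp (-x) ≤ 1 := by
        rw [Real.exp_le_one_iff]
        linarith
      have hA1 : x^x * Real.exp (-x) ≤ 1 :=
        mul_le_one₀ hxx (Real.exp_nonneg _) hex
      have hsq2pi : Real.sqrt (2*Real.pi) ^ 2 = 2*Real.pi := Real.sq_sqrt h2π.le
      have h18Q : 18*(x^2+x/3+1/18) < (Real.sqrt (2*Real.pi)/2)^4 := by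
        have : (Real.sqrt (2*Real.pi)/2)^4 = ((Real.sqrt (2*Real.pi))^2)^2/16 := by ring
        rw [this, hsq2pi]
        nlinarith
      have hBlt : (18:ℝ)^((1:ℝ)/4) * (x^2+x/3+1/18)^((1:ℝ)/4) < Real.sqrt (2*Real.pi)/2 := by
        have hmul : (18:ℝ)^((1:ℝ)/4) * (x^2+x/3+1/18)^((1:ℝ)/4)
            = (18*(x^2+x/3+1/18))^((1:ℝ)/4) :=
          (Real.mul_rpow (by norm_num) hQ.le).symm
        rw [hmul]
        have hs2 : (0:ℝ) < Real.sqrt (2*Real.pi)/2 := by positivity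
        calc (18*(x^2+x/3+1/18))^((1:ℝ)/4)
            < ((Real.sqrt (2*Real.pi)/2)^4)^((1:ℝ)/4) :=
              Real.rpow_lt_rpow (by positivity) h18Q (by norm_num)
          _ = Real.sqrt (2*Real.pi)/2 := by
              rw [← Real.rpow_natCast (Real.sqrt (2*Real.pi)/2) 4, ← Real.rpow_mul hs2.le]
              norm_num
      have hBv : (18:ℝ)^((1:ℝ)/4) * (x^2+x/3+1/18)^((1:ℝ)/4) / Real.sqrt (2*Real.pi) < 1/2 := by
        rw [div_lt_iff₀ (Real.sqrt_pos.mpr h2π)]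
        calc (18:ℝ)^((1:ℝ)/4) * (x^2+x/3+1/18)^((1:ℝ)/4) < Real.sqrt (2*Real.pi)/2 := hBlt
          _ = 1/2 * Real.sqrt (2*Real.pi) := by ring
      have hBvpos : (0:ℝ) < (18:ℝ)^((1:ℝ)/4) * (x^2+x/3+1/18)^((1:ℝ)/4) / Real.sqrt (2*Real.pi) := by
        have h18 : (0:ℝ) < (18:ℝ)^((1:ℝ)/4) := Real.rpow_pos_of_pos (by norm_num) _
        have hQ4 : (0:ℝ) < (x^2+x/3+1/18)^((1:ℝ)/4) := Real.rpow_pos_of_pos hQ _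
        positivity
      calc ((18:ℝ) ^ ((1:ℝ)/4) / Real.sqrt (2 * Real.pi)) * x ^ x * Real.exp (-x) *
            (x^2 + x/3 + 1/18) ^ ((1:ℝ)/4)
          = (x^x * Real.exp (-x)) *
            ((18:ℝ)^((1:ℝ)/4) * (x^2+x/3+1/18)^((1:ℝ)/4) / Real.sqrt (2*Real.pi)) := by
            ring
        _ ≤ ((18:ℝ)^((1:ℝ)/4) * (x^2+x/3+1/18)^((1:ℝ)/4) / Real.sqrt (2*Real.pi)) :=
            mul_le_of_le_one_left hBvpos.le hA1
        _ < 1/2 := hBv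
        _ ≤ Real.Gamma (x+1) := hgam_half
  · -- upper bound
    have hG := Gg_neg hx
    unfold Gg Qp at hG
    have e1 : Real.sqrt (2*Real.pi) = Real.exp (Real.log (2*Real.pi)/2) := by
      rw [Real.sqrt_eq_rpow, Real.rpow_def_of_pos h2π, mul_one_div]
    have e2 : x^x = Real.exp (x * Real.log x) := by
      rw [Real.rpow_def_of_pos hx, mul_comm]
    have e3 : (x^2+x/3+1/18 : ℝ) ^ ((1:ℝ)/4) = Real.exp (Real.log (x^2+x/3+1/18)/4) := by
      rw [Real.rpow_def_of_pos hQ, mul_one_div]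
    rw [e1, e2, e3, ← Real.exp_log hΓpos]
    rw [← Real.exp_add, ← Real.exp_add, ← Real.exp_add]
    apply Real.exp_lt_exp.mpr
    linarith
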